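/- Let A* ∈ ℂ^{N×n} be isometric, x0 ∈ ℂ^n with y0 := A*x0 having all components nonzero, b := |y0|, ω0 the componentwise phase of y0, and B := A·diag(ω0) with A = (A*)^H. Let S_loc(v) = (I − B*B)Re(v) + i B*B Im(v). Then S_loc(b) = 0 and S_loc(i b) = i b; that is, the real vector b = |A*x0| is in the kernel of S_loc, and i b is a fixed point (eigenvector with eigenvalue 1) of S_loc. -/

import Mathlib

open Matrix Complex

noncomputable section

/-- The componentwise phase `z/|z|`. -/
noncomputable def phase (z : ℂ) : ℂ := z / (‖z‖ : ℂ)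

/-- `B = A · diag(ω0)` where `A = (A*)ᴴ`. -/
noncomputable def Bmat {N n : ℕ} (Aadj : Matrix (Fin N) (Fin n) ℂ) (ω0 : Fin N → ℂ) :
    Matrix (Fin n) (Fin N) ℂ := fun i j => Aadjᴴ i j * ω0 j

/-- The linearization `S_loc(v) = (I − B*B) Re(v) + i B*B Im(v)`. -/
noncomputable def Sloc {n N : ℕ} (B : Matrix (Fin n) (Fin N) ℂ) (v : Fin N → ℂ) : Fin N → ℂ :=
  fun j => (((v j).re : ℂ) - (Bᴴ * B).mulVec (fun i => (((v i).re : ℝ) : ℂ)) j)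
    + Complex.I * (Bᴴ * B).mulVec (fun i => (((v i).im : ℝ) : ℂ)) j

lemma Bmat_eq {N n : ℕ} (Aadj : Matrix (Fin N) (Fin n) ℂ) (ω0 : Fin N → ℂ) :
    Bmat Aadj ω0 = Aadjᴴ * Matrix.diagonal ω0 := by
  ext i j; simp [Bmat, Matrix.mul_diagonal]

lemma key {N n : ℕ} (Aadj : Matrix (Fin N) (Fin n) ℂ) (hiso : Aadjᴴ * Aadj = 1)
    (x0 : Fin n → ℂ) (hy0 : ∀ j, Aadj.mulVec x0 j ≠ 0)
    (ω0 : Fin N → ℂ) (hω0 : ∀ j, ω0 j = phase (Aadj.mulVec x0 j)) :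
    ((Bmat Aadj ω0)ᴴ * Bmat Aadj ω0).mulVec
      (fun j => ((‖Aadj.mulVec x0 j‖ : ℝ) : ℂ))
    = fun j => ((‖Aadj.mulVec x0 j‖ : ℝ) : ℂ) := by
  set y0 := Aadj.mulVec x0 with hy0def
  have habs : ∀ j, (‖y0 j‖ : ℂ) ≠ 0 := fun j => by
    simpa using norm_ne_zero_iff.mpr (hy0 j)
  have h1 : (Matrix.diagonal ω0).mulVec (fun j => ((‖y0 j‖ : ℝ) : ℂ)) = y0 := by
    funext j
    simp only [Matrix.mulVec_diagonal, hω0 j, phase]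
    rw [div_mul_eq_mul_div, mul_div_assoc, div_self (habs j), mul_one]
  rw [Bmat_eq, conjTranspose_mul, diagonal_conjTranspose, conjTranspose_conjTranspose]
  rw [← mulVec_mulVec, ← mulVec_mulVec, ← mulVec_mulVec, h1]
  have h2 : Aadjᴴ.mulVec y0 = x0 := by
    rw [hy0def, mulVec_mulVec, hiso, one_mulVec]
  rw [h2, ← hy0def]
  funext j
  simp only [Matrix.mulVec_diagonal, Pi.star_apply, hω0 j, phase]
  rw [Complex.star_def, map_div₀, Complex.conj_ofReal, div_mul_eq_mul_div, mul_comm,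
    Complex.mul_conj, ← Complex.sq_norm, Complex.ofReal_pow, sq, mul_div_assoc,
    div_self (habs j), mul_one]

/-- The vector `b = |A*x0|` lies in the kernel of `S_loc` and `i b` is a fixed point of
`S_loc`. -/
theorem stmt6 (N n : ℕ) (Aadj : Matrix (Fin N) (Fin n) ℂ) (hiso : Aadjᴴ * Aadj = 1)
    (x0 : Fin n → ℂ) (hy0 : ∀ j, Aadj.mulVec x0 j ≠ 0)
    (ω0 : Fin N → ℂ) (hω0 : ∀ j, ω0 j = phase (Aadj.mulVec x0 j)) :
    Sloc (Bmat Aadj ω0) (fun j => ((‖Aadj.mulVec x0 j‖ : ℝ) : ℂ)) = 0 ∧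
    Sloc (Bmat Aadj ω0) (fun j => Complex.I * ((‖Aadj.mulVec x0 j‖ : ℝ) : ℂ))
      = fun j => Complex.I * ((‖Aadj.mulVec x0 j‖ : ℝ) : ℂ) := by
  have hk := key Aadj hiso x0 hy0 ω0 hω0
  set b : Fin N → ℂ := fun j => ((‖Aadj.mulVec x0 j‖ : ℝ) : ℂ) with hb
  constructor
  · funext j
    have hre : (fun i => ((((b i).re : ℝ)) : ℂ)) = b := by funext i; simp [hb]
    have him : (fun i => ((((b i).im : ℝ)) : ℂ)) = (0 : Fin N → ℂ) := by funext i; simp [hb]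
    simp only [Sloc, hre, him, hk, mulVec_zero, Pi.zero_apply, mul_zero, add_zero]
    simp [hb]
  · funext j
    have hre : (fun i => ((((Complex.I * b i).re : ℝ)) : ℂ)) = (0 : Fin N → ℂ) := by
      funext i; simp [hb]
    have him : (fun i => ((((Complex.I * b i).im : ℝ)) : ℂ)) = b := by funext i; simp [hb]
    simp only [Sloc, hre, him, hk, mulVec_zero, Pi.zero_apply]
    simp [hb] at hk ⊢
    rw [show (fun _ : Fin N => (0:ℂ)) = 0 from rfl, mulVec_zero, hk]
    simp
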